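/- Let A be a finite nonempty alphabet and d ≥ 1. If L is a regular language over A whose complement (in List A) is Π₁_d[N]-definable, then the complement of L is Π₁_d[Reg]-definable. (That is, every regular language definable by a Σ₁ sentence with arbitrary numerical predicates is definable by a Σ₁ sentence with regular numerical predicates.) -/

import Mathlib

def NumPredEncoding {d : ℕ} (N : (Fin d → ℕ) → ℕ → Prop) :
    Language (Finset (Fin d)) :=
  {u | ∃ p : Fin d → Fin u.length,
    (∀ j : Fin d, ∀ q : Fin u.length, j ∈ u.get q ↔ q = p j) ∧
    N (fun j => (p j : ℕ)) u.length}

def IsRegularNumPred {d : ℕ} (N : (Fin d → ℕ) → ℕ → Prop) : Prop :=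
  (NumPredEncoding N).IsRegular

def Pi1NDefinable (A : Type*) (d : ℕ) (L : Set (List A)) : Prop :=
  ∃ N : (Fin d → A) → (Fin d → ℕ) → ℕ → Prop,
    ∀ w : List A, w ∈ L ↔ ∀ i : Fin d → Fin w.length,
      N (fun j => w.get (i j)) (fun j => (i j : ℕ)) w.length

def Pi1RegDefinable (A : Type*) (d : ℕ) (L : Set (List A)) : Prop :=
  ∃ N : (Fin d → A) → (Fin d → ℕ) → ℕ → Prop,
    (∀ a : Fin d → A, IsRegularNumPred (N a)) ∧
    ∀ w : List A, w ∈ L ↔ ∀ i : Fin d → Fin w.length,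
      N (fun j => w.get (i j)) (fun j => (i j : ℕ)) w.length

section Aux

variable {A : Type} {σ : Type} {d : ℕ}

/-- Reachability relation in the product automaton. -/
def MyReach (M : DFA A σ) (a : Fin d → A) :
    σ × Finset (Fin d) → List (Finset (Fin d)) → σ × Finset (Fin d) → Prop
  | p, [], p' => p' = p
  | p, s :: u, p' => Disjoint s p.2 ∧
      ∃ c : A, (∀ j ∈ s, c = a j) ∧ MyReach M a (M.step p.1 c, p.2 ∪ s) u p'

/-- The (determinized) product automaton recognizing the encoding. -/
def AutoM (M : DFA A σ) (a : Fin d → A) :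
    DFA (Finset (Fin d)) (Set (σ × Finset (Fin d))) where
  step S s := {p' | ∃ p ∈ S, MyReach M a p [s] p'}
  start := {(M.start, ∅)}
  accept := {S | ∃ q : σ, (q, (Finset.univ : Finset (Fin d))) ∈ S ∧ q ∉ M.accept}

lemma mem_evalFrom_AutoM (M : DFA A σ) (a : Fin d → A) :
    ∀ (u : List (Finset (Fin d))) (S : Set (σ × Finset (Fin d)))
      (p' : σ × Finset (Fin d)),
      p' ∈ (AutoM M a).evalFrom S u ↔ ∃ p ∈ S, MyReach M a p u p'
  | [], S, p' => by
      simp only [DFA.evalFrom, List.foldl_nil, MyReach]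
      constructor
      · exact fun h => ⟨p', h, rfl⟩
      · rintro ⟨p, hp, rfl⟩; exact hp
  | s :: u, S, p' => by
      have : (AutoM M a).evalFrom S (s :: u)
          = (AutoM M a).evalFrom ((AutoM M a).step S s) u := rfl
      rw [this, mem_evalFrom_AutoM M a u]
      constructor
      · rintro ⟨p₁, hp₁, hr⟩
        obtain ⟨p, hp, hd, c, hc, h1⟩ := hp₁
        subst h1
        exact ⟨p, hp, hd, c, hc, hr⟩
      · rintro ⟨p, hp, hd, c, hc, hr⟩
        exact ⟨(M.step p.1 c, p.2 ∪ s), ⟨p, hp, hd, c, hc, rfl⟩, hr⟩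

lemma myReach_iff (M : DFA A σ) (a : Fin d → A) :
    ∀ (u : List (Finset (Fin d))) (q₀ : σ) (t₀ : Finset (Fin d)) (q : σ)
      (t : Finset (Fin d)),
      MyReach M a (q₀, t₀) u (q, t) ↔
        ∃ w : List A, w.length = u.length ∧ M.evalFrom q₀ w = q ∧
          t = t₀ ∪ u.foldr (· ∪ ·) ∅ ∧
          (∀ s ∈ u, Disjoint s t₀) ∧ u.Pairwise Disjoint ∧
          (∀ x ∈ u.zip w, ∀ j ∈ x.1, x.2 = a j)
  | [], q₀, t₀, q, t => by
      simp only [MyReach, Prod.mk.injEq, List.foldr_nil, List.length_nil,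
        List.length_eq_zero_iff]
      constructor
      · rintro ⟨rfl, rfl⟩
        exact ⟨[], rfl, rfl, by simp, by simp, by simp, by simp⟩
      · rintro ⟨w, rfl, hq, ht, -⟩
        exact ⟨hq.symm, by simpa using ht⟩
  | s :: u, q₀, t₀, q, t => by
      simp only [MyReach]
      constructor
      · rintro ⟨hd, c, hc, hr⟩
        rw [myReach_iff M a u] at hr
        obtain ⟨w, hlen, hq, ht, hdis, hpw, hz⟩ := hr
        refine ⟨c :: w, by simp [hlen], hq, ?_, ?_, ?_, ?_⟩
        · simpa [Finset.union_assoc] using ht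
        · intro s' hs'
          rcases List.mem_cons.1 hs' with rfl | hs'
          · exact hd
          · exact Finset.disjoint_union_right.1 (hdis s' hs') |>.1
        · refine List.Pairwise.cons (fun s' hs' => ?_) hpw
          exact (Finset.disjoint_union_right.1 (hdis s' hs')).2.symm
        · intro x hx j hj
          rcases List.mem_cons.1 hx with rfl | hx
          · exact hc j hj
          · exact hz x hx j hj
      · rintro ⟨w, hlen, hq, ht, hdis, hpw, hz⟩
        match w with
        | [] => simp at hlen
        | c :: w =>
          refine ⟨hdis s List.mem_cons_self, c, fun j hj => hz (s, c) (by simp) j hj, ?_⟩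
          rw [myReach_iff M a u]
          refine ⟨w, by simpa using hlen, hq, ?_, ?_, ?_, ?_⟩
          · simpa [Finset.union_assoc] using ht
          · intro s' hs'
            rw [Finset.disjoint_union_right]
            exact ⟨hdis s' (List.mem_cons_of_mem s hs'),
              ((List.pairwise_cons.1 hpw).1 s' hs').symm⟩
          · exact (List.pairwise_cons.1 hpw).2
          · intro x hx j hj
            exact hz x (List.mem_cons_of_mem _ hx) j hj

lemma mem_foldr_union (j : Fin d) :
    ∀ u : List (Finset (Fin d)), j ∈ u.foldr (· ∪ ·) ∅ ↔ ∃ s ∈ u, j ∈ s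
  | [] => by simp
  | s :: u => by
      simp [mem_foldr_union j u]

/-- The key language equality: the product automaton recognizes the encoding of
the "agreeing word outside `M.accepts`" predicate. -/
lemma accepts_AutoM (M : DFA A σ) (a : Fin d → A) :
    (AutoM M a).accepts = NumPredEncoding (fun (p : Fin d → ℕ) (n : ℕ) =>
      ∃ w : List A, w ∉ M.accepts ∧ w.length = n ∧
        ∀ j : Fin d, w[p j]? = some (a j)) := by
  ext u
  rw [DFA.mem_accepts]
  show ((AutoM M a).evalFrom {(M.start, ∅)} u ∈ _) ↔ _
  constructor
  · rintro ⟨q, hq, hqacc⟩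
    rw [mem_evalFrom_AutoM] at hq
    obtain ⟨p, hp, hr⟩ := hq
    rcases Set.mem_singleton_iff.1 hp with rfl
    rw [myReach_iff] at hr
    obtain ⟨w, hlen, hq, ht, -, hpw, hz⟩ := hr
    -- every j occurs in exactly one letter of u
    have hocc : ∀ j : Fin d, ∃ n : Fin u.length, j ∈ u.get n := by
      intro j
      have : j ∈ u.foldr (· ∪ ·) ∅ := by
        have : j ∈ (∅ : Finset (Fin d)) ∪ u.foldr (· ∪ ·) ∅ := ht ▸ Finset.mem_univ j
        simpa using this
      obtain ⟨s, hs, hjs⟩ := (mem_foldr_union j u).1 this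
      obtain ⟨n, hn, rfl⟩ := List.mem_iff_getElem.1 hs
      exact ⟨⟨n, hn⟩, hjs⟩
    have huniq : ∀ (j : Fin d) (n m : Fin u.length),
        j ∈ u.get n → j ∈ u.get m → n = m := by
      intro j n m hn hm
      by_contra hne
      have h1 := List.pairwise_iff_getElem.1 hpw
      rcases lt_or_gt_of_ne (Fin.val_ne_of_ne hne) with hlt | hlt
      · simpa using (h1 n m n.isLt m.isLt hlt).le_bot (Finset.mem_inter.2 ⟨hn, hm⟩)
      · simpa using (h1 m n m.isLt n.isLt hlt).le_bot (Finset.mem_inter.2 ⟨hm, hn⟩)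
    classical
    choose pos hpos using hocc
    refine ⟨pos, fun j q' => ⟨fun hj => huniq j q' (pos j) hj (hpos j),
      fun hq' => hq' ▸ hpos j⟩, w, ?_, hlen, ?_⟩
    · rw [DFA.mem_accepts]; show M.evalFrom M.start w ∈ M.accept → False; rw [hq]; exact hqacc
    · intro j
      have hlt : ((pos j : ℕ)) < w.length := by rw [hlen]; exact (pos j).isLt
      rw [List.getElem?_eq_getElem hlt]
      have : ((u.zip w)[(pos j : ℕ)]'(by simp [List.length_zip, hlen])) ∈ u.zip w :=
        List.getElem_mem _
      have h2 := hz _ this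
      rw [List.getElem_zip] at h2
      exact congrArg some (h2 j (hpos j))
  · rintro ⟨p, hmark, w, hw, hlen, hget⟩
    rw [DFA.mem_accepts] at hw
    refine ⟨M.evalFrom M.start w, ?_, hw⟩
    rw [mem_evalFrom_AutoM]
    refine ⟨(M.start, ∅), rfl, ?_⟩
    rw [myReach_iff]
    refine ⟨w, hlen, rfl, ?_, fun s _ => Finset.disjoint_empty_right s, ?_, ?_⟩
    · symm
      rw [Finset.empty_union]
      apply Finset.eq_univ_of_forall
      intro j
      rw [mem_foldr_union]
      exact ⟨u.get (p j), List.get_mem u (p j), (hmark j (p j)).2 rfl⟩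
    · rw [List.pairwise_iff_getElem]
      intro n m hn hm hnm
      rw [Finset.disjoint_left]
      intro j hjn hjm
      have e1 : (⟨n, hn⟩ : Fin u.length) = p j := (hmark j ⟨n, hn⟩).1 hjn
      have e2 : (⟨m, hm⟩ : Fin u.length) = p j := (hmark j ⟨m, hm⟩).1 hjm
      have e3 : n = m := congrArg Fin.val (e1.trans e2.symm)
      omega
    · intro x hx j hj
      obtain ⟨n, hn, rfl⟩ := List.mem_iff_getElem.1 hx
      rw [List.getElem_zip] at hj ⊢
      have hn' : n < u.length := by simp [List.length_zip] at hn; omega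
      have : (⟨n, hn'⟩ : Fin u.length) = p j := (hmark j ⟨n, hn'⟩).1 hj
      have hv := hget j
      rw [List.getElem?_eq_getElem (by rw [hlen]; exact (p j).isLt)] at hv
      have : w[n]'(by rw [hlen]; exact hn') = w[(p j : ℕ)]'(by rw [hlen]; exact (p j).isLt) := by
        congr 1
        exact congrArg Fin.val this
      show w[n]'_ = a j
      rw [this]
      exact Option.some_inj.1 hv

end Aux

theorem sigma1_regular_collapse (A : Type) [Fintype A] [Nonempty A] (d : ℕ) (hd : 1 ≤ d)
    (L : Set (List A)) (hreg : Language.IsRegular (L : Language A))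
    (h : Pi1NDefinable A d Lᶜ) : Pi1RegDefinable A d Lᶜ := by
  obtain ⟨N, hN⟩ := h
  obtain ⟨σ, _, M, hM⟩ := hreg
  refine ⟨fun a p n => ∃ w : List A, w ∉ L ∧ w.length = n ∧
    ∀ j : Fin d, w[(p j : ℕ)]? = some (a j), ?_, ?_⟩
  · intro a
    refine ⟨Set (σ × Finset (Fin d)), Fintype.ofFinite _, AutoM M a, ?_⟩
    rw [accepts_AutoM, hM]
    rfl
  · intro w
    constructor
    · intro hw i
      refine ⟨w, hw, rfl, fun j => ?_⟩
      exact List.getElem?_eq_getElem (i j).isLt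
    · intro hi
      rw [hN w]
      intro i
      obtain ⟨v, hv, hlen, hget⟩ := hi i
      have hvN := (hN v).1 hv
      have hvN' := hvN (fun j => Fin.cast hlen.symm (i j))
      have e1 : (fun j => v.get (Fin.cast hlen.symm (i j)))
          = fun j => w.get (i j) := by
        funext j
        have := hget j
        rw [List.getElem?_eq_getElem (by rw [hlen]; exact (i j).isLt)] at this
        exact Option.some_inj.1 this
      have e2 : (fun j => ((Fin.cast hlen.symm (i j) : Fin v.length) : ℕ))
          = fun j => ((i j : ℕ)) := by funext j; rfl
      rw [e1, e2, hlen] at hvN'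
      exact hvN'
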